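/- With the chart φ_{B,B^⊥}(A) = q(B + A B^⊥) on the Grassmannian of hyperplanes, where B = (I_n | 0) and B^⊥ = (0 … 0 1), the map f(x,y,z,A) = ((B+AB^⊥)ᵀ x + z, (B+AB^⊥)ᵀ y) from ℝⁿ × ℝⁿ × ℝ^{n+1} × M_{n×1}(ℝ) to ℝ^{n+1} × ℝ^{n+1} has derivative of rank 2n+2 at (x,y,z,A) if y ≠ 0, and rank 2n+1 if y = 0. -/

import Mathlib

/-- The map `f(x,y,z,A) = ((B+AB^⊥)ᵀ x + z, (B+AB^⊥)ᵀ y)` with `B = (I_n | 0)`,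
`B^⊥ = (0,…,0,1)`, `A ∈ M_{n×1}(ℝ)` (identified with a vector of `ℝⁿ`):
here `(B+AB^⊥)ᵀ v = (v, ⟨A, v⟩) ∈ ℝ^{n+1}`. -/
noncomputable def grassAux (n : ℕ) :
    (Fin n → ℝ) × (Fin n → ℝ) × (Fin (n + 1) → ℝ) × (Fin n → ℝ) →
      (Fin (n + 1) → ℝ) × (Fin (n + 1) → ℝ) :=
  fun p =>
    (Fin.snoc p.1 (∑ i, p.2.2.2 i * p.1 i) + p.2.2.1,
      Fin.snoc p.2.1 (∑ i, p.2.2.2 i * p.2.1 i))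

private lemma snocAdd {n : ℕ} (u v : Fin n → ℝ) (a b : ℝ) :
    (Fin.snoc (u + v) (a + b) : Fin (n+1) → ℝ) = Fin.snoc u a + Fin.snoc v b := by
  funext i
  refine Fin.lastCases ?_ (fun j => ?_) i <;> simp

private lemma snocSmul {n : ℕ} (c : ℝ) (u : Fin n → ℝ) (a : ℝ) :
    (Fin.snoc (c • u) (c * a) : Fin (n+1) → ℝ) = c • (Fin.snoc u a : Fin (n+1) → ℝ) := by
  funext i
  refine Fin.lastCases ?_ (fun j => ?_) i <;> simp

private lemma snocZero {n : ℕ} : (Fin.snoc 0 0 : Fin (n+1) → ℝ) = 0 := by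
  funext i
  refine Fin.lastCases ?_ (fun j => ?_) i <;> simp

/-- the candidate derivative, as a linear map -/
private def gDerL (n : ℕ) (x y A : Fin n → ℝ) :
    ((Fin n → ℝ) × (Fin n → ℝ) × (Fin (n + 1) → ℝ) × (Fin n → ℝ)) →ₗ[ℝ]
      ((Fin (n + 1) → ℝ) × (Fin (n + 1) → ℝ)) where
  toFun h :=
    (Fin.snoc h.1 (∑ i, A i * h.1 i + ∑ i, h.2.2.2 i * x i) + h.2.2.1,
      Fin.snoc h.2.1 (∑ i, A i * h.2.1 i + ∑ i, h.2.2.2 i * y i))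
  map_add' h h' := by
    refine Prod.ext ?_ ?_ <;>
      simp only [Prod.fst_add, Prod.snd_add, Pi.add_apply, mul_add, add_mul,
        Finset.sum_add_distrib]
    · rw [show (∑ i, A i * h.1 i + ∑ i, A i * h'.1 i) +
          (∑ i, h.2.2.2 i * x i + ∑ i, h'.2.2.2 i * x i)
          = (∑ i, A i * h.1 i + ∑ i, h.2.2.2 i * x i)
            + (∑ i, A i * h'.1 i + ∑ i, h'.2.2.2 i * x i) by ring, snocAdd]
      abel
    · rw [show (∑ i, A i * h.2.1 i + ∑ i, A i * h'.2.1 i) +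
          (∑ i, h.2.2.2 i * y i + ∑ i, h'.2.2.2 i * y i)
          = (∑ i, A i * h.2.1 i + ∑ i, h.2.2.2 i * y i)
            + (∑ i, A i * h'.2.1 i + ∑ i, h'.2.2.2 i * y i) by ring, snocAdd]
  map_smul' c h := by
    have e1 : ∀ w u : Fin n → ℝ, ∑ i, w i * (c * u i) = c * ∑ i, w i * u i := fun w u => by
      rw [Finset.mul_sum]; exact Finset.sum_congr rfl fun i _ => by ring
    have e2 : ∀ w u : Fin n → ℝ, ∑ i, (c * w i) * u i = c * ∑ i, w i * u i := fun w u => by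
      rw [Finset.mul_sum]; exact Finset.sum_congr rfl fun i _ => by ring
    refine Prod.ext ?_ ?_ <;>
      simp only [Prod.smul_fst, Prod.smul_snd, Pi.smul_apply, smul_eq_mul, RingHom.id_apply]
    · rw [show (∑ i, A i * (c * h.1 i) + ∑ i, (c * h.2.2.2 i) * x i)
          = c * (∑ i, A i * h.1 i + ∑ i, h.2.2.2 i * x i) by rw [e1, e2]; ring]
      rw [snocSmul, smul_add]
    · rw [show (∑ i, A i * (c * h.2.1 i) + ∑ i, (c * h.2.2.2 i) * y i)
          = c * (∑ i, A i * h.2.1 i + ∑ i, h.2.2.2 i * y i) by rw [e1, e2]; ring]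
      rw [snocSmul]

private lemma gDerL_apply {n : ℕ} (x y A : Fin n → ℝ) (h) : gDerL n x y A h =
    (Fin.snoc h.1 (∑ i, A i * h.1 i + ∑ i, h.2.2.2 i * x i) + h.2.2.1,
      Fin.snoc h.2.1 (∑ i, A i * h.2.1 i + ∑ i, h.2.2.2 i * y i)) := rfl

private lemma hasFDerivAt_grassAux {n : ℕ} (x y : Fin n → ℝ) (z : Fin (n+1) → ℝ)
    (A : Fin n → ℝ) :
    HasFDerivAt (grassAux n) (LinearMap.toContinuousLinearMap (gDerL n x y A)) (x, y, z, A) := by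
  rw [hasFDerivAt_iff_isLittleO_nhds_zero]
  have key : ∀ h : (Fin n → ℝ) × (Fin n → ℝ) × (Fin (n + 1) → ℝ) × (Fin n → ℝ),
      grassAux n ((x, y, z, A) + h) - grassAux n (x, y, z, A)
        - LinearMap.toContinuousLinearMap (gDerL n x y A) h =
      ((Fin.snoc 0 (∑ i, h.2.2.2 i * h.1 i) : Fin (n+1) → ℝ),
       (Fin.snoc 0 (∑ i, h.2.2.2 i * h.2.1 i) : Fin (n+1) → ℝ)) := by
    intro h
    have : LinearMap.toContinuousLinearMap (gDerL n x y A) h = gDerL n x y A h := rfl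
    rw [this, gDerL_apply]
    refine Prod.ext ?_ ?_ <;> funext i <;>
      refine Fin.lastCases ?_ (fun j => ?_) i <;>
      simp [grassAux, Fin.snoc_last, Fin.snoc_castSucc, mul_add, add_mul,
        Finset.sum_add_distrib] <;> ring
  have snb : ∀ a : ℝ, ‖(Fin.snoc 0 a : Fin (n+1) → ℝ)‖ ≤ |a| := by
    intro a
    refine (pi_norm_le_iff_of_nonneg (abs_nonneg a)).mpr fun i => ?_
    refine Fin.lastCases ?_ (fun j => ?_) i <;>
      simp [Fin.snoc_last, Fin.snoc_castSucc, Real.norm_eq_abs, le_abs_self]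
  have bnd : ∀ h : (Fin n → ℝ) × (Fin n → ℝ) × (Fin (n + 1) → ℝ) × (Fin n → ℝ),
      ‖((Fin.snoc 0 (∑ i, h.2.2.2 i * h.1 i) : Fin (n+1) → ℝ),
        (Fin.snoc 0 (∑ i, h.2.2.2 i * h.2.1 i) : Fin (n+1) → ℝ))‖ ≤ (n : ℝ) * (‖h‖ * ‖h‖) := by
    intro h
    have hA : ∀ i, |h.2.2.2 i| ≤ ‖h‖ := fun i =>
      (norm_le_pi_norm h.2.2.2 i).trans <| (norm_snd_le h.2.2).trans <|
        (norm_snd_le h.2).trans (norm_snd_le h)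
    have hx : ∀ i, |h.1 i| ≤ ‖h‖ := fun i =>
      (norm_le_pi_norm h.1 i).trans (norm_fst_le h)
    have hy : ∀ i, |h.2.1 i| ≤ ‖h‖ := fun i =>
      (norm_le_pi_norm h.2.1 i).trans <| (norm_fst_le h.2).trans (norm_snd_le h)
    have sumb : ∀ u v : Fin n → ℝ, (∀ i, |u i| ≤ ‖h‖) → (∀ i, |v i| ≤ ‖h‖) →
        |∑ i, u i * v i| ≤ (n : ℝ) * (‖h‖ * ‖h‖) := by
      intro u v hu hv
      calc |∑ i, u i * v i| ≤ ∑ i, |u i * v i| := Finset.abs_sum_le_sum_abs _ _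
        _ ≤ ∑ _i : Fin n, ‖h‖ * ‖h‖ := Finset.sum_le_sum fun i _ => by
              rw [abs_mul]
              exact mul_le_mul (hu i) (hv i) (abs_nonneg _) (norm_nonneg _)
        _ = (n : ℝ) * (‖h‖ * ‖h‖) := by simp [Finset.sum_const]
    rw [Prod.norm_def]
    exact max_le
      ((snb _).trans (sumb _ _ hA hx))
      ((snb _).trans (sumb _ _ hA hy))
  have big : (fun h : (Fin n → ℝ) × (Fin n → ℝ) × (Fin (n + 1) → ℝ) × (Fin n → ℝ) =>
      grassAux n ((x, y, z, A) + h) - grassAux n (x, y, z, A)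
        - LinearMap.toContinuousLinearMap (gDerL n x y A) h)
      =O[nhds 0] fun h => ‖h‖ * ‖h‖ := by
    refine Asymptotics.IsBigO.of_bound n (Filter.Eventually.of_forall fun h => ?_)
    rw [key h, Real.norm_of_nonneg (mul_nonneg (norm_nonneg _) (norm_nonneg _))]
    exact bnd h
  have little : (fun h : (Fin n → ℝ) × (Fin n → ℝ) × (Fin (n + 1) → ℝ) × (Fin n → ℝ) =>
      ‖h‖ * ‖h‖) =o[nhds 0] fun h => h := by
    simpa [pow_two] using Asymptotics.isLittleO_norm_pow_id
      (E' := (Fin n → ℝ) × (Fin n → ℝ) × (Fin (n + 1) → ℝ) × (Fin n → ℝ)) (n := 2) one_lt_two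
  exact big.trans_isLittleO little

/-- the graph map `v ↦ (v, ⟨A, v⟩)` -/
private def gGraph (n : ℕ) (A : Fin n → ℝ) : (Fin n → ℝ) →ₗ[ℝ] (Fin (n+1) → ℝ) where
  toFun v := Fin.snoc v (∑ i, A i * v i)
  map_add' u v := by
    simp only [Pi.add_apply, mul_add, Finset.sum_add_distrib]
    rw [snocAdd]
  map_smul' c v := by
    simp only [Pi.smul_apply, smul_eq_mul, RingHom.id_apply]
    rw [show (∑ i, A i * (c * v i)) = c * ∑ i, A i * v i by
      rw [Finset.mul_sum]; exact Finset.sum_congr rfl fun i _ => by ring, snocSmul]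

/-- The derivative of `f(x,y,z,A) = ((B+AB^⊥)ᵀx + z, (B+AB^⊥)ᵀy)` has rank
`2n+2` at `(x,y,z,A)` when `y ≠ 0`, and rank `2n+1` when `y = 0`. -/
theorem stmt7 (n : ℕ) (x y : Fin n → ℝ) (z : Fin (n + 1) → ℝ) (A : Fin n → ℝ) :
    Module.finrank ℝ (LinearMap.range (fderiv ℝ (grassAux n) (x, y, z, A)).toLinearMap) =
      if y ≠ 0 then 2 * n + 2 else 2 * n + 1 := by
  rw [(hasFDerivAt_grassAux x y z A).fderiv]
  have hcoe : LinearMap.range (LinearMap.toContinuousLinearMap (gDerL n x y A)).toLinearMap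
      = LinearMap.range (gDerL n x y A) := rfl
  rw [hcoe]
  by_cases hy : y = 0
  · subst hy
    simp only [ne_eq, not_true_eq_false, if_false]
    have hrange : LinearMap.range (gDerL n x 0 A) =
        LinearMap.range (LinearMap.prodMap (LinearMap.id :
          (Fin (n+1) → ℝ) →ₗ[ℝ] (Fin (n+1) → ℝ)) (gGraph n A)) := by
      apply le_antisymm
      · rintro - ⟨h, rfl⟩
        refine ⟨(Fin.snoc h.1 (∑ i, A i * h.1 i + ∑ i, h.2.2.2 i * x i) + h.2.2.1, h.2.1), ?_⟩
        rw [gDerL_apply]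
        refine Prod.ext rfl ?_
        simp only [LinearMap.prodMap_apply, gGraph, LinearMap.coe_mk, AddHom.coe_mk,
          LinearMap.id_coe, id_eq, Pi.zero_apply, mul_zero, Finset.sum_const_zero, add_zero]
      · rintro - ⟨⟨u, v⟩, rfl⟩
        refine ⟨(0, v, u, 0), ?_⟩
        rw [gDerL_apply]
        refine Prod.ext ?_ ?_
        · simp only [LinearMap.prodMap_apply, LinearMap.id_coe, id_eq, Pi.zero_apply,
            mul_zero, zero_mul, Finset.sum_const_zero, add_zero, zero_add, snocZero]
        · simp only [LinearMap.prodMap_apply, gGraph, LinearMap.coe_mk, AddHom.coe_mk,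
            Pi.zero_apply, zero_mul, Finset.sum_const_zero, add_zero]
    rw [hrange]
    have hinj : Function.Injective
        (LinearMap.prodMap (LinearMap.id :
          (Fin (n+1) → ℝ) →ₗ[ℝ] (Fin (n+1) → ℝ)) (gGraph n A)) := by
      have hg : Function.Injective (gGraph n A) := by
        intro u v huv
        funext i
        have h2 := congrFun huv (Fin.castSucc i)
        simpa [gGraph] using h2
      exact Function.Injective.prodMap (fun a b h => h) hg
    rw [LinearMap.finrank_range_of_inj hinj]
    simp only [Module.finrank_prod, Module.finrank_pi, Fintype.card_fin,
      Module.finrank_fin_fun]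
    ring
  · simp only [ne_eq, hy, not_false_eq_true, if_true]
    have hsurj : Function.Surjective (gDerL n x y A) := by
      rintro ⟨u, v⟩
      have hS : (∑ i, y i * y i) ≠ 0 := by
        intro hS0
        apply hy
        funext i
        exact mul_self_eq_zero.mp <|
          (Finset.sum_eq_zero_iff_of_nonneg (fun i _ => mul_self_nonneg (y i))).mp hS0 i
            (Finset.mem_univ i)
      set c := (v (Fin.last n) - ∑ i, A i * v (Fin.castSucc i)) / (∑ i, y i * y i) with hc
      refine ⟨((0 : Fin n → ℝ), fun i => v (Fin.castSucc i),
        u - Fin.snoc (0 : Fin n → ℝ) (∑ i, (c * y i) * x i), fun i => c * y i), ?_⟩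
      rw [gDerL_apply]
      refine Prod.ext ?_ ?_
      · show Fin.snoc (0 : Fin n → ℝ) (∑ i, A i * (0 : Fin n → ℝ) i + ∑ i, (c * y i) * x i)
            + (u - Fin.snoc (0 : Fin n → ℝ) (∑ i, (c * y i) * x i)) = u
        simp only [Pi.zero_apply, mul_zero, Finset.sum_const_zero, zero_add]
        abel
      · show (Fin.snoc (fun i => v (Fin.castSucc i))
            (∑ i, A i * v (Fin.castSucc i) + ∑ i, (c * y i) * y i) : Fin (n+1) → ℝ) = v
        funext i
        refine Fin.lastCases ?_ (fun j => ?_) i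
        · rw [Fin.snoc_last]
          have he : (∑ i, (c * y i) * y i) = c * ∑ i, y i * y i := by
            rw [Finset.mul_sum]; exact Finset.sum_congr rfl fun i _ => by ring
          rw [he, hc, div_mul_cancel₀ _ hS]
          ring
        · rw [Fin.snoc_castSucc]
    rw [LinearMap.range_eq_top.mpr hsurj]
    rw [finrank_top]
    simp only [Module.finrank_prod, Module.finrank_pi, Fintype.card_fin,
      Module.finrank_fin_fun]
    ring
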